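/- arXiv:1506.09144 — 3 statements merged into one kernel-verified Lean document; each statement's English description precedes it below -/
import Mathlib

section
/- For a proper domain Ω in real projective space, C_Ω is a metric on Ω: it is nonnegative, symmetric, satisfies the triangle inequality, and C_Ω(p,q) = 0 if and only if p = q. -/
open Projectivization Filter Topology

/-- Real projective space `P(ℝ^{d+1})`. -/
abbrev PV (d : ℕ) := Projectivization ℝ (Fin (d+1) → ℝ)

/-- The quotient topology on real projective space. -/
instance (d : ℕ) : TopologicalSpace (PV d) :=
  inferInstanceAs (TopologicalSpace (Quotient (projectivizationSetoid ℝ (Fin (d+1) → ℝ))))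

/-- The dual set `Ω*`: (classes of) nonzero linear functionals whose kernel misses `Ω`. -/
def dualSet {d : ℕ} (Ω : Set (PV d)) : Set (Module.Dual ℝ (Fin (d+1) → ℝ)) :=
  {f | f ≠ 0 ∧ ∀ p ∈ Ω, f p.rep ≠ 0}

/-- `log |f(p)g(q)/(f(q)g(p))|`, computed using representatives (it is independent of
the choice of representatives of `p`, `q`, `f`, `g`). -/
noncomputable def logRatio {d : ℕ} (f g : Module.Dual ℝ (Fin (d+1) → ℝ)) (p q : PV d) : ℝ :=
  Real.log (|f p.rep * g q.rep| / |f q.rep * g p.rep|)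

/-- The Hilbert-type cross-ratio function `C_Ω(p,q) = sup_{f,g ∈ Ω*} log|f(p)g(q)/(f(q)g(p))|`. -/
noncomputable def CC {d : ℕ} (Ω : Set (PV d)) (p q : PV d) : ℝ :=
  sSup {t | ∃ f ∈ dualSet Ω, ∃ g ∈ dualSet Ω, t = logRatio f g p q}

/-- A proper domain: open, connected, and bounded in some affine chart (equivalently,
its closure misses some projective hyperplane). -/
def IsProperDomain {d : ℕ} (Ω : Set (PV d)) : Prop :=
  IsOpen Ω ∧ IsConnected Ω ∧
    ∃ f : Module.Dual ℝ (Fin (d+1) → ℝ), f ≠ 0 ∧ ∀ p ∈ closure Ω, f p.rep ≠ 0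

namespace CCAux

variable {d : ℕ}

abbrev VV (d : ℕ) := Fin (d+1) → ℝ

/-- The cone over a set of projective points. -/
def cone (S : Set (PV d)) : Set (VV d) :=
  {v | ∃ hv : v ≠ 0, Projectivization.mk ℝ v hv ∈ S}

lemma isOpen_cone {S : Set (PV d)} (hS : IsOpen S) : IsOpen (cone S) := by
  have hc : Continuous (fun v : {w : VV d // w ≠ 0} =>
      (Projectivization.mk ℝ v.1 v.2 : PV d)) := continuous_quotient_mk'
  have hq : IsOpen {v : {w : VV d // w ≠ 0} | Projectivization.mk ℝ v.1 v.2 ∈ S} :=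
    hS.preimage hc
  have h2 : IsOpen {w : VV d | w ≠ 0} := isOpen_compl_singleton
  have h3 := h2.isOpenMap_subtype_val _ hq
  convert h3 using 1
  ext v
  constructor
  · rintro ⟨hv, hmem⟩; exact ⟨⟨v, hv⟩, hmem, rfl⟩
  · rintro ⟨⟨w, hw⟩, hmem, rfl⟩; exact ⟨hw, hmem⟩

lemma rep_eq_smul (v : VV d) (hv : v ≠ 0) :
    ∃ a : ℝ, a ≠ 0 ∧ (Projectivization.mk ℝ v hv).rep = a • v := by
  obtain ⟨a, ha⟩ := Projectivization.exists_smul_eq_mk_rep ℝ v hv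
  exact ⟨a, a.ne_zero, ha.symm⟩

lemma apply_rep_ne_zero_iff {f : Module.Dual ℝ (VV d)} {v : VV d} (hv : v ≠ 0) :
    f ((Projectivization.mk ℝ v hv).rep) ≠ 0 ↔ f v ≠ 0 := by
  obtain ⟨a, ha, hrep⟩ := rep_eq_smul v hv
  rw [hrep, map_smul, smul_eq_mul, mul_ne_zero_iff]
  simp [ha]

lemma mem_cone_of_mem {S : Set (PV d)} {p : PV d} (hp : p ∈ S) : p.rep ∈ cone S :=
  ⟨p.rep_nonzero, by rwa [Projectivization.mk_rep]⟩

lemma mk_smul_eq (v : VV d) (hv : v ≠ 0) (a : ℝ) (ha : a ≠ 0) :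
    Projectivization.mk ℝ (a • v) (smul_ne_zero ha hv) = Projectivization.mk ℝ v hv :=
  (Projectivization.mk_eq_mk_iff' ℝ _ _ _ hv).2 ⟨a, rfl⟩

lemma smul_mem_cone {S : Set (PV d)} {v : VV d} (hv : v ∈ cone S) (a : ℝ) (ha : a ≠ 0) :
    a • v ∈ cone S := by
  obtain ⟨hv0, hmem⟩ := hv
  exact ⟨smul_ne_zero ha hv0, by rwa [mk_smul_eq v hv0 a ha]⟩

lemma mem_dualSet_iff {Ω : Set (PV d)} {f : Module.Dual ℝ (VV d)} :
    f ∈ dualSet Ω ↔ f ≠ 0 ∧ ∀ v ∈ cone Ω, f v ≠ 0 := by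
  constructor
  · rintro ⟨hf0, hf⟩
    refine ⟨hf0, ?_⟩
    rintro v ⟨hv, hmem⟩
    exact (apply_rep_ne_zero_iff hv).1 (hf _ hmem)
  · rintro ⟨hf0, hf⟩
    exact ⟨hf0, fun p hp => hf _ (mem_cone_of_mem hp)⟩

/-- Functional with coefficient vector `c`. -/
noncomputable def Φ (c : VV d) : Module.Dual ℝ (VV d) := ∑ i, c i • LinearMap.proj i

lemma Φ_apply (c v : VV d) : Φ c v = ∑ i, c i * v i := by
  simp [Φ, LinearMap.sum_apply, LinearMap.smul_apply, LinearMap.proj_apply, smul_eq_mul]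

lemma Φ_zero : (Φ 0 : Module.Dual ℝ (VV d)) = 0 := by
  apply LinearMap.ext; intro v; simp [Φ_apply]

lemma Φ_smul (a : ℝ) (c : VV d) (v : VV d) : Φ (a • c) v = a * Φ c v := by
  simp [Φ_apply, Finset.mul_sum, mul_assoc]

lemma Φ_coeff (f : Module.Dual ℝ (VV d)) : Φ (fun i => f (Pi.single i 1)) = f := by
  apply LinearMap.ext; intro v
  have hv : v = ∑ i, v i • (Pi.single i 1 : VV d) := by
    ext j
    simp [Finset.sum_apply, Pi.single_apply]
  rw [Φ_apply]
  conv_rhs => rw [hv]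
  rw [map_sum]
  exact Finset.sum_congr rfl fun i _ => by rw [map_smul, smul_eq_mul, mul_comm]

lemma continuous_Φ_apply (v : VV d) : Continuous fun c : VV d => Φ c v := by
  simp only [Φ_apply]
  exact continuous_finset_sum _ fun i _ => (continuous_apply i).mul continuous_const


lemma isOpen_bad {Ω : Set (PV d)} (hΩ : IsOpen Ω) :
    IsOpen {c : VV d | c ≠ 0 ∧ ∃ v ∈ cone Ω, Φ c v = 0} := by
  rw [isOpen_iff_mem_nhds]
  rintro c₀ ⟨hc₀, x, hx, hΦx⟩
  obtain ⟨j, hj⟩ : ∃ j, c₀ j ≠ 0 := by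
    by_contra h; push_neg at h; exact hc₀ (funext h)
  set y : VV d := Pi.single j 1 with hy
  have hΦy : Φ c₀ y ≠ 0 := by
    have : Φ c₀ y = c₀ j := by
      simp [Φ_apply, hy, Pi.single_apply]
    rw [this]; exact hj
  set F : VV d → VV d := fun c => x - (Φ c x / Φ c y) • y with hF
  have hO1 : IsOpen {c : VV d | Φ c y ≠ 0} :=
    isOpen_compl_singleton.preimage (continuous_Φ_apply y)
  have hFc : ContinuousOn F {c : VV d | Φ c y ≠ 0} := by
    apply continuousOn_const.sub
    exact (((continuous_Φ_apply x).continuousOn.div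
      (continuous_Φ_apply y).continuousOn fun c hc => hc).smul continuousOn_const)
  have hopen := hFc.isOpen_inter_preimage hO1 (isOpen_cone hΩ)
  have hc₀mem : c₀ ∈ {c : VV d | Φ c y ≠ 0} ∩ F ⁻¹' cone Ω := by
    refine ⟨hΦy, ?_⟩
    have : F c₀ = x := by simp [hF, hΦx]
    simpa [Set.mem_preimage, this]
  apply Filter.mem_of_superset (hopen.mem_nhds hc₀mem)
  rintro c ⟨hcy, hFmem⟩
  refine ⟨?_, F c, hFmem, ?_⟩
  · intro h0
    rw [h0] at hcy
    exact hcy (by simp [Φ_apply])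
  · simp only [hF, map_sub, map_smul, smul_eq_mul]
    rw [div_mul_cancel₀ _ hcy, sub_self]

lemma ratio_bound {Ω : Set (PV d)} (hΩ : IsOpen Ω) {x y : VV d}
    (hx : x ∈ cone Ω) (hy : y ∈ cone Ω) :
    ∃ M : ℝ, ∀ f ∈ dualSet Ω, |f x| ≤ M * |f y| := by
  classical
  set K := Metric.sphere (0 : VV d) 1 ∩ {c : VV d | c ≠ 0 ∧ ∃ v ∈ cone Ω, Φ c v = 0}ᶜ with hK
  have hKc : IsCompact K := (isCompact_sphere 0 1).inter_right (isOpen_bad hΩ).isClosed_compl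
  have hKmem : ∀ c ∈ K, ‖c‖ = 1 ∧ ∀ v ∈ cone Ω, Φ c v ≠ 0 := by
    rintro c ⟨hs, hb⟩
    have hnorm : ‖c‖ = 1 := by simpa using hs
    have hc0 : c ≠ 0 := by intro h; rw [h] at hnorm; simp at hnorm
    exact ⟨hnorm, fun v hv hΦ => hb ⟨hc0, v, hv, hΦ⟩⟩
  have key : ∀ f ∈ dualSet Ω, ∃ c' ∈ K, ∃ t : ℝ, 0 < t ∧ ∀ v, f v = t * Φ c' v := by
    intro f hf
    rw [mem_dualSet_iff] at hf
    obtain ⟨hf0, hfv⟩ := hf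
    set c : VV d := fun i => f (Pi.single i 1) with hc
    have hΦc : Φ c = f := Φ_coeff f
    have hc0 : c ≠ 0 := by
      intro h
      exact hf0 (by rw [← hΦc, h, Φ_zero])
    have hnc : (0:ℝ) < ‖c‖ := norm_pos_iff.mpr hc0
    refine ⟨‖c‖⁻¹ • c, ⟨?_, ?_⟩, ‖c‖, hnc, fun v => ?_⟩
    · simp only [Metric.mem_sphere, dist_zero_right, norm_smul, norm_inv, norm_norm]
      field_simp
    · rintro ⟨-, v, hv, hΦv⟩
      rw [Φ_smul, hΦc] at hΦv
      have : f v = 0 := by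
        rcases mul_eq_zero.1 hΦv with h | h
        · exact absurd h (inv_ne_zero hnc.ne')
        · exact h
      exact hfv v hv this
    · rw [Φ_smul, hΦc]
      field_simp
  rcases Set.eq_empty_or_nonempty K with hKe | hKne
  · refine ⟨1, fun f hf => ?_⟩
    obtain ⟨c', hc', -⟩ := key f hf
    rw [hKe] at hc'
    exact hc'.elim
  · obtain ⟨c₀, hc₀K, hmin⟩ := hKc.exists_isMinOn hKne
      (((continuous_Φ_apply y).abs).continuousOn)
    set m := |Φ c₀ y| with hm
    have hmpos : 0 < m := abs_pos.2 ((hKmem c₀ hc₀K).2 y hy)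
    set Sx := ∑ i, |x i| with hSx
    have hSx0 : 0 ≤ Sx := Finset.sum_nonneg fun i _ => abs_nonneg _
    refine ⟨Sx / m, fun f hf => ?_⟩
    obtain ⟨c', hc'K, t, ht, hft⟩ := key f hf
    obtain ⟨hc'n, -⟩ := hKmem c' hc'K
    have h1 : |Φ c' x| ≤ Sx := by
      rw [Φ_apply]
      calc |∑ i, c' i * x i| ≤ ∑ i, |c' i * x i| := Finset.abs_sum_le_sum_abs _ _
        _ ≤ ∑ i, |x i| := by
            apply Finset.sum_le_sum
            intro i _
            rw [abs_mul]
            calc |c' i| * |x i| ≤ 1 * |x i| := by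
                  apply mul_le_mul_of_nonneg_right _ (abs_nonneg _)
                  calc |c' i| ≤ ‖c'‖ := by
                        simpa [Real.norm_eq_abs] using norm_le_pi_norm c' i
                    _ = 1 := hc'n
              _ = |x i| := one_mul _
    have h2 : m ≤ |Φ c' y| := hmin hc'K
    rw [hft x, hft y, abs_mul, abs_mul, abs_of_pos ht]
    calc t * |Φ c' x| ≤ t * Sx := by
          exact mul_le_mul_of_nonneg_left h1 ht.le
      _ = (Sx / m) * (t * m) := by field_simp
      _ ≤ (Sx / m) * (t * |Φ c' y|) := by
          apply mul_le_mul_of_nonneg_left _ (div_nonneg hSx0 hmpos.le)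
          exact mul_le_mul_of_nonneg_left h2 ht.le

lemma logRatio_eq {f g : Module.Dual ℝ (VV d)} {p q : PV d}
    (h1 : f p.rep ≠ 0) (h2 : g q.rep ≠ 0) (h3 : f q.rep ≠ 0) (h4 : g p.rep ≠ 0) :
    logRatio f g p q =
      (Real.log |f p.rep| + Real.log |g q.rep|) -
        (Real.log |f q.rep| + Real.log |g p.rep|) := by
  unfold logRatio
  rw [abs_mul, abs_mul,
    Real.log_div (mul_ne_zero (abs_ne_zero.2 h1) (abs_ne_zero.2 h2))
      (mul_ne_zero (abs_ne_zero.2 h3) (abs_ne_zero.2 h4)),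
    Real.log_mul (abs_ne_zero.2 h1) (abs_ne_zero.2 h2),
    Real.log_mul (abs_ne_zero.2 h3) (abs_ne_zero.2 h4)]

lemma logRatio_self (f g : Module.Dual ℝ (VV d)) (p : PV d) : logRatio f g p p = 0 := by
  unfold logRatio
  rcases eq_or_ne (|f p.rep * g p.rep|) 0 with h | h
  · rw [h]; simp
  · rw [div_self h, Real.log_one]

lemma logRatio_symm (f g : Module.Dual ℝ (VV d)) (p q : PV d) :
    logRatio f g p q = logRatio g f q p := by
  unfold logRatio
  rw [mul_comm (f p.rep) (g q.rep), mul_comm (f q.rep) (g p.rep)]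

lemma bddAbove_ratioSet {Ω : Set (PV d)} (hΩ : IsOpen Ω) {p q : PV d}
    (hp : p ∈ Ω) (hq : q ∈ Ω) :
    BddAbove {t | ∃ f ∈ dualSet Ω, ∃ g ∈ dualSet Ω, t = logRatio f g p q} := by
  obtain ⟨M₁, hM₁⟩ := ratio_bound hΩ (mem_cone_of_mem hp) (mem_cone_of_mem hq)
  obtain ⟨M₂, hM₂⟩ := ratio_bound hΩ (mem_cone_of_mem hq) (mem_cone_of_mem hp)
  refine ⟨Real.log (M₁ * M₂), ?_⟩
  rintro t ⟨f, hf, g, hg, rfl⟩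
  have hfp := hf.2 p hp
  have hfq := hf.2 q hq
  have hgp := hg.2 p hp
  have hgq := hg.2 q hq
  unfold logRatio
  have hden : 0 < |f q.rep * g p.rep| := abs_pos.2 (mul_ne_zero hfq hgp)
  have hnum : 0 < |f p.rep * g q.rep| := abs_pos.2 (mul_ne_zero hfp hgq)
  apply Real.log_le_log (div_pos hnum hden)
  rw [div_le_iff₀ hden, abs_mul, abs_mul]
  calc |f p.rep| * |g q.rep| ≤ (M₁ * |f q.rep|) * (M₂ * |g p.rep|) := by
        apply mul_le_mul (hM₁ f hf) (hM₂ g hg) (abs_nonneg _)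
        exact le_trans (abs_nonneg _) (hM₁ f hf)
    _ = M₁ * M₂ * (|f q.rep| * |g p.rep|) := by ring


lemma exists_pos_logRatio {Ω : Set (PV d)} (hΩ : IsProperDomain Ω) {p q : PV d}
    (hp : p ∈ Ω) (hq : q ∈ Ω) (hpq : p ≠ q) :
    ∃ f ∈ dualSet Ω, ∃ g ∈ dualSet Ω, 0 < logRatio f g p q := by
  classical
  obtain ⟨hopen, hconn, h0, hh00, hh0c⟩ := hΩ
  have hh0cone : ∀ v ∈ cone (closure Ω), h0 v ≠ 0 := by
    rintro v ⟨hv, hmem⟩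
    exact (apply_rep_ne_zero_iff hv).1 (hh0c _ hmem)
  -- the compact set of unit vectors over the closure
  set A := Metric.sphere (0 : VV d) 1 ∩ (cone ((closure Ω)ᶜ))ᶜ with hA
  have hAc : IsCompact A :=
    (isCompact_sphere 0 1).inter_right (isOpen_cone isClosed_closure.isOpen_compl).isClosed_compl
  have hAmem : ∀ v, v ∈ A ↔ ‖v‖ = 1 ∧ v ∈ cone (closure Ω) := by
    intro v
    constructor
    · rintro ⟨hs, hnc⟩
      have h1 : ‖v‖ = 1 := by simpa using hs
      have hv0 : v ≠ 0 := by intro h; rw [h] at h1; simp at h1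
      refine ⟨h1, hv0, ?_⟩
      by_contra hmem
      exact hnc ⟨hv0, hmem⟩
    · rintro ⟨h1, hv0, hmem⟩
      refine ⟨by simpa using h1, ?_⟩
      rintro ⟨hv0', hmem'⟩
      exact hmem' hmem
  -- the slice of the cone over the closure at height h0 = 1
  set B := {w : VV d | h0 w = 1 ∧ w ∈ cone (closure Ω)} with hB
  have hBne0 : ∀ w ∈ B, w ≠ 0 := by
    rintro w ⟨hw1, -⟩ h
    rw [h] at hw1
    simp at hw1
  have toA : ∀ w ∈ B, ‖w‖⁻¹ • w ∈ A := by
    intro w hw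
    have hw0 := hBne0 w hw
    have hnw : (0:ℝ) < ‖w‖ := norm_pos_iff.2 hw0
    rw [hAmem]
    constructor
    · rw [norm_smul, norm_inv, norm_norm]
      field_simp
    · exact smul_mem_cone hw.2 _ (inv_ne_zero hnw.ne')
  have hBR : ∃ R : ℝ, 0 ≤ R ∧ ∀ w ∈ B, ‖w‖ ≤ R := by
    rcases Set.eq_empty_or_nonempty A with hAe | hAne
    · refine ⟨0, le_refl _, fun w hw => ?_⟩
      have := toA w hw
      rw [hAe] at this
      exact this.elim
    · obtain ⟨v₀, hv₀, hmin⟩ := hAc.exists_isMinOn hAne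
        ((h0.continuous_of_finiteDimensional.abs).continuousOn)
      set m := |h0 v₀| with hm
      have hmpos : 0 < m := abs_pos.2 (hh0cone v₀ ((hAmem v₀).1 hv₀).2)
      refine ⟨m⁻¹, inv_nonneg.2 hmpos.le, fun w hw => ?_⟩
      have hw0 := hBne0 w hw
      have hnw : (0:ℝ) < ‖w‖ := norm_pos_iff.2 hw0
      have h1 : m ≤ |h0 (‖w‖⁻¹ • w)| := hmin (toA w hw)
      have h2 : |h0 (‖w‖⁻¹ • w)| = ‖w‖⁻¹ := by
        rw [map_smul, smul_eq_mul, hw.1, mul_one, abs_of_pos (inv_pos.2 hnw)]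
      rw [h2] at h1
      rw [← inv_inv ‖w‖]
      exact inv_anti₀ hmpos h1
  obtain ⟨R, hR0, hRB⟩ := hBR
  -- the closed convex hull
  set C := closure (convexHull ℝ B) with hC
  have hCconv : Convex ℝ C := (convex_convexHull ℝ B).closure
  have hCclosed : IsClosed C := isClosed_closure
  have hBC : B ⊆ C := (subset_convexHull ℝ B).trans subset_closure
  have hCh0 : ∀ v ∈ C, h0 v = 1 := by
    have hconvH : Convex ℝ {v : VV d | h0 v = 1} :=
      convex_hyperplane (IsLinearMap.mk h0.map_add h0.map_smul) 1
    have hclosedH : IsClosed {v : VV d | h0 v = 1} := by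
      have : {v : VV d | h0 v = 1} = h0 ⁻¹' {1} := rfl
      rw [this]
      exact isClosed_singleton.preimage h0.continuous_of_finiteDimensional
    intro v hv
    exact closure_minimal (convexHull_min (fun w hw => hw.1) hconvH) hclosedH hv
  have hCball : C ⊆ Metric.closedBall 0 R := by
    apply closure_minimal (convexHull_min ?_ (convex_closedBall 0 R)) Metric.isClosed_closedBall
    intro w hw
    rw [mem_closedBall_zero_iff]
    exact hRB w hw
  -- normalized representatives of points of Ω
  have hrepne : ∀ p' ∈ Ω, h0 p'.rep ≠ 0 := fun p' hp' => hh0c p' (subset_closure hp')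
  have hnrmB : ∀ p' ∈ Ω, ((h0 p'.rep)⁻¹ • p'.rep) ∈ B := by
    intro p' hp'
    have hα := hrepne p' hp'
    constructor
    · rw [map_smul, smul_eq_mul, inv_mul_cancel₀ hα]
    · exact smul_mem_cone (mem_cone_of_mem (subset_closure hp')) _ (inv_ne_zero hα)
  set u := (h0 p.rep)⁻¹ • p.rep with hu
  set w := (h0 q.rep)⁻¹ • q.rep with hw
  have hα := hrepne p hp
  have hβ := hrepne q hq
  have hub : u ∈ B := hnrmB p hp
  have hwb : w ∈ B := hnrmB q hq
  have hu0 : u ≠ 0 := hBne0 u hub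
  have hw0 : w ≠ 0 := hBne0 w hwb
  have hprep : p.rep = (h0 p.rep) • u := (smul_inv_smul₀ hα p.rep).symm
  have hqrep : q.rep = (h0 q.rep) • w := (smul_inv_smul₀ hβ q.rep).symm
  have huw : u ≠ w := by
    intro h
    apply hpq
    have h1 : Projectivization.mk ℝ u hu0 = p := by
      have h1' := mk_smul_eq p.rep p.rep_nonzero _ (inv_ne_zero hα)
      rw [Projectivization.mk_rep] at h1'
      exact h1'
    have h2 : Projectivization.mk ℝ w hw0 = q := by
      have h2' := mk_smul_eq q.rep q.rep_nonzero _ (inv_ne_zero hβ)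
      rw [Projectivization.mk_rep] at h2'
      exact h2'
    rw [← h1, ← h2]
    congr 1
  have hwu0 : (0:ℝ) < ‖w - u‖ := by
    rw [norm_pos_iff, sub_ne_zero]
    exact fun h => huw h.symm
  -- the line through u and w
  set L : ℝ → VV d := fun t => u + t • (w - u) with hL
  have hLlin : ∀ (ψ : Module.Dual ℝ (VV d)) (t : ℝ), ψ (L t) = (1-t) * ψ u + t * ψ w := by
    intro ψ t
    simp only [hL, map_add, map_smul, map_sub, smul_eq_mul]
    ring
  have hLh0 : ∀ t, h0 (L t) = 1 := by
    intro t
    rw [hLlin h0 t, hub.1, hwb.1]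
    ring
  -- points on the line far away are outside C
  set T : ℝ := (R + ‖u‖ + 1) / ‖w - u‖ with hT
  have hT0 : 0 ≤ T := div_nonneg (by positivity) hwu0.le
  have houtside : ∀ t : ℝ, T + 1 ≤ |t| → L t ∉ C := by
    intro t ht hmem
    have h1 : ‖L t‖ ≤ R := mem_closedBall_zero_iff.1 (hCball hmem)
    have h2 : ‖t • (w-u)‖ ≤ ‖L t‖ + ‖u‖ := by
      have he : t • (w-u) = L t - u := by simp [hL]
      rw [he]
      exact norm_sub_le _ _
    rw [norm_smul, Real.norm_eq_abs] at h2
    have h3 : (T+1) * ‖w - u‖ ≤ |t| * ‖w-u‖ := mul_le_mul_of_nonneg_right ht hwu0.le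
    have h4 : (T+1) * ‖w-u‖ = R + ‖u‖ + 1 + ‖w-u‖ := by
      rw [hT, add_mul, div_mul_cancel₀ _ hwu0.ne', one_mul]
    linarith
  -- separating functionals
  have sep : ∀ s : ℝ, L s ∉ C →
      ∃ g : Module.Dual ℝ (VV d), (∀ v ∈ C, 0 < g v) ∧ g (L s) = 0 := by
    intro s hs
    obtain ⟨φ, r, hφs, hφC⟩ := geometric_hahn_banach_point_closed hCconv hCclosed hs
    refine ⟨(φ : VV d →ₗ[ℝ] ℝ) - (φ (L s)) • h0, fun v hv => ?_, ?_⟩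
    · simp only [LinearMap.sub_apply, LinearMap.smul_apply, smul_eq_mul,
        ContinuousLinearMap.coe_coe]
      rw [hCh0 v hv, mul_one]
      have := hφC v hv
      linarith
    · simp only [LinearMap.sub_apply, LinearMap.smul_apply, smul_eq_mul,
        ContinuousLinearMap.coe_coe]
      rw [hLh0 s, mul_one, sub_self]
  set s₀ : ℝ := -(T+1) with hs₀
  set s₁ : ℝ := T + 2 with hs₁
  obtain ⟨g, hgC, hg0⟩ := sep s₀ (houtside s₀ (by rw [abs_of_nonpos (by linarith)]; linarith))
  obtain ⟨f, hfC, hf0⟩ := sep s₁ (houtside s₁ (by rw [abs_of_nonneg (by linarith)]; linarith))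
  have hgu : 0 < g u := hgC u (hBC hub)
  have hgw : 0 < g w := hgC w (hBC hwb)
  have hfu : 0 < f u := hfC u (hBC hub)
  have hfw : 0 < f w := hfC w (hBC hwb)
  -- g u < g w
  have hgeq : (1-s₀) * g u + s₀ * g w = 0 := by rw [← hLlin g s₀, hg0]
  have hgult : g u < g w := by
    have h5 : (1-s₀) * g u < (1-s₀) * g w := by nlinarith
    exact lt_of_mul_lt_mul_left h5 (by simp only [hs₀]; linarith)
  -- f w < f u
  have hfeq : (1-s₁) * f u + s₁ * f w = 0 := by rw [← hLlin f s₁, hf0]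
  have hfwlt : f w < f u := by
    have h5 : s₁ * f w < s₁ * f u := by nlinarith
    exact lt_of_mul_lt_mul_left h5 (by simp only [hs₁]; linarith)
  -- both functionals are in the dual set
  have hdual : ∀ ψ : Module.Dual ℝ (VV d), (∀ v ∈ C, 0 < ψ v) → ψ ∈ dualSet Ω := by
    intro ψ hψ
    constructor
    · intro h
      have := hψ u (hBC hub)
      rw [h] at this
      simp at this
    · intro p' hp'
      have hα' := hrepne p' hp'
      have hz := hnrmB p' hp'
      have he : ψ p'.rep = (h0 p'.rep) * ψ ((h0 p'.rep)⁻¹ • p'.rep) := by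
        conv_lhs => rw [← smul_inv_smul₀ hα' p'.rep]
        rw [map_smul, smul_eq_mul]
      rw [he]
      exact mul_ne_zero hα' (ne_of_gt (hψ _ (hBC hz)))
  refine ⟨f, hdual f hfC, g, hdual g hgC, ?_⟩
  unfold logRatio
  apply Real.log_pos
  have key2 : ∀ (ψ : Module.Dual ℝ (VV d)) (a : ℝ) (v x : VV d), x = a • v → ψ x = a * ψ v :=
    fun ψ a v x h => by rw [h, map_smul, smul_eq_mul]
  have e1 := key2 f _ u _ hprep
  have e2 := key2 g _ w _ hqrep
  have e3 := key2 f _ w _ hqrep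
  have e4 := key2 g _ u _ hprep
  rw [e1, e2, e3, e4,
    show (h0 p.rep * f u) * (h0 q.rep * g w) = (h0 p.rep * h0 q.rep) * (f u * g w) by ring,
    show (h0 q.rep * f w) * (h0 p.rep * g u) = (h0 p.rep * h0 q.rep) * (f w * g u) by ring,
    abs_mul (h0 p.rep * h0 q.rep) (f u * g w),
    abs_mul (h0 p.rep * h0 q.rep) (f w * g u),
    mul_div_mul_left _ _ (abs_ne_zero.2 (mul_ne_zero hα hβ)),
    abs_of_pos (mul_pos hfu hgw), abs_of_pos (mul_pos hfw hgu),
    lt_div_iff₀ (mul_pos hfw hgu), one_mul]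
  exact mul_lt_mul'' hfwlt hgult hfw.le hgu.le

end CCAux

open CCAux in
/-- for a proper domain `Ω`, `C_Ω` is a metric on `Ω`: nonnegative,
symmetric, satisfies the triangle inequality, and vanishes exactly on the diagonal. -/
theorem CC_is_metric {d : ℕ} (Ω : Set (PV d)) (hΩ : IsProperDomain Ω) :
    (∀ p ∈ Ω, ∀ q ∈ Ω, 0 ≤ CC Ω p q) ∧
    (∀ p ∈ Ω, ∀ q ∈ Ω, CC Ω p q = CC Ω q p) ∧
    (∀ p ∈ Ω, ∀ q ∈ Ω, ∀ r ∈ Ω, CC Ω p q ≤ CC Ω p r + CC Ω r q) ∧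
    (∀ p ∈ Ω, ∀ q ∈ Ω, (CC Ω p q = 0 ↔ p = q)) := by
  obtain ⟨hopen, hconn, h0, hh00, hh0c⟩ := hΩ
  have hΩ' : IsProperDomain Ω := ⟨hopen, hconn, h0, hh00, hh0c⟩
  have hdual0 : h0 ∈ dualSet Ω := ⟨hh00, fun p hp => hh0c p (subset_closure hp)⟩
  -- 0 is in each ratio set
  have hzero : ∀ p ∈ Ω, ∀ q ∈ Ω,
      (0:ℝ) ∈ {t | ∃ f ∈ dualSet Ω, ∃ g ∈ dualSet Ω, t = logRatio f g p q} := by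
    intro p hp q hq
    refine ⟨h0, hdual0, h0, hdual0, ?_⟩
    unfold logRatio
    rw [mul_comm (h0 q.rep) (h0 p.rep),
      div_self (abs_ne_zero.2 (mul_ne_zero (hdual0.2 p hp) (hdual0.2 q hq))),
      Real.log_one]
  have hbdd : ∀ p ∈ Ω, ∀ q ∈ Ω,
      BddAbove {t | ∃ f ∈ dualSet Ω, ∃ g ∈ dualSet Ω, t = logRatio f g p q} :=
    fun p hp q hq => bddAbove_ratioSet hopen hp hq
  have hnonneg : ∀ p ∈ Ω, ∀ q ∈ Ω, 0 ≤ CC Ω p q :=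
    fun p hp q hq => le_csSup (hbdd p hp q hq) (hzero p hp q hq)
  have hdiag : ∀ p ∈ Ω, CC Ω p p = 0 := by
    intro p hp
    have : {t | ∃ f ∈ dualSet Ω, ∃ g ∈ dualSet Ω, t = logRatio f g p p} = {0} := by
      ext t
      constructor
      · rintro ⟨f, hf, g, hg, rfl⟩
        simp [logRatio_self]
      · rintro rfl
        exact hzero p hp p hp
    rw [CC, this, csSup_singleton]
  refine ⟨hnonneg, ?_, ?_, ?_⟩
  · -- symmetry
    intro p hp q hq
    unfold CC
    congr 1
    ext t
    constructor
    · rintro ⟨f, hf, g, hg, rfl⟩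
      exact ⟨g, hg, f, hf, logRatio_symm f g p q⟩
    · rintro ⟨f, hf, g, hg, rfl⟩
      exact ⟨g, hg, f, hf, logRatio_symm f g q p⟩
  · -- triangle
    intro p hp q hq r hr
    apply csSup_le ⟨0, hzero p hp q hq⟩
    rintro t ⟨f, hf, g, hg, rfl⟩
    have h1 : logRatio f g p r ≤ CC Ω p r :=
      le_csSup (hbdd p hp r hr) ⟨f, hf, g, hg, rfl⟩
    have h2 : logRatio f g r q ≤ CC Ω r q :=
      le_csSup (hbdd r hr q hq) ⟨f, hf, g, hg, rfl⟩
    have heq : logRatio f g p q = logRatio f g p r + logRatio f g r q := by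
      rw [logRatio_eq (hf.2 p hp) (hg.2 q hq) (hf.2 q hq) (hg.2 p hp),
        logRatio_eq (hf.2 p hp) (hg.2 r hr) (hf.2 r hr) (hg.2 p hp),
        logRatio_eq (hf.2 r hr) (hg.2 q hq) (hf.2 q hq) (hg.2 r hr)]
      ring
    linarith
  · -- vanishes exactly on the diagonal
    intro p hp q hq
    constructor
    · intro h
      by_contra hne
      obtain ⟨f, hf, g, hg, hpos⟩ := exists_pos_logRatio hΩ' hp hq hne
      have : logRatio f g p q ≤ CC Ω p q :=
        le_csSup (hbdd p hp q hq) ⟨f, hf, g, hg, rfl⟩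
      rw [h] at this
      linarith
    · rintro rfl
      exact hdiag p hp
end

section
/- Suppose Ω ⊂ P(ℝ^{d+1}) is a proper domain and p_n, q_n ∈ Ω are sequences with p_n → x ∈ ∂Ω, q_n → y ∈ ∂Ω, and limsup C_Ω(p_n, q_n) < ∞. Then y ∈ ker f for every f ∈ Ω* with f(x) = 0. -/
open Projectivization Filter Topology

noncomputable def normRatio {d : ℕ} (f : Module.Dual ℝ (Fin (d+1) → ℝ)) : PV d → ℝ :=
  Projectivization.lift (fun v => |f v.1| / ‖v.1‖) (by
    rintro ⟨a, ha⟩ ⟨b, hb⟩ t (rfl : a = t • b)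
    have ht : t ≠ 0 := by rintro rfl; simp at ha
    simp only [map_smul, norm_smul, smul_eq_mul, abs_mul, Real.norm_eq_abs]
    rw [mul_div_mul_left _ _ (abs_ne_zero.2 ht)])

lemma normRatio_mk {d : ℕ} (f : Module.Dual ℝ (Fin (d+1) → ℝ)) (v : Fin (d+1) → ℝ) (hv : v ≠ 0) :
    normRatio f (Projectivization.mk ℝ v hv) = |f v| / ‖v‖ := rfl

lemma normRatio_rep {d : ℕ} (f : Module.Dual ℝ (Fin (d+1) → ℝ)) (x : PV d) :
    normRatio f x = |f x.rep| / ‖x.rep‖ := by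
  conv_lhs => rw [← Projectivization.mk_rep x]
  rfl

lemma continuous_normRatio {d : ℕ} (f : Module.Dual ℝ (Fin (d+1) → ℝ)) :
    Continuous (normRatio (d := d) f) := by
  apply Continuous.quotient_lift
  exact ((f.continuous_of_finiteDimensional.comp continuous_subtype_val).abs).div
    (continuous_norm.comp continuous_subtype_val)
    (fun v => norm_ne_zero_iff.2 v.2)

lemma rep_smul {d : ℕ} (v : Fin (d+1) → ℝ) (hv : v ≠ 0) :
    ∃ a : ℝ, a ≠ 0 ∧ (Projectivization.mk ℝ v hv).rep = a • v := by
  have h := (Projectivization.mk_rep (Projectivization.mk ℝ v hv))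
  rw [Projectivization.mk_eq_mk_iff] at h
  obtain ⟨a, ha⟩ := h
  exact ⟨a, a.ne_zero, ha.symm⟩

-- f nonvanishing on reps implies nonvanishing on cone vectors
lemma cone_nonzero {d : ℕ} {Ω : Set (PV d)} {f : Module.Dual ℝ (Fin (d+1) → ℝ)}
    (hf : ∀ p ∈ Ω, f p.rep ≠ 0) {v : Fin (d+1) → ℝ} (hv : v ≠ 0)
    (hmem : Projectivization.mk ℝ v hv ∈ Ω) : f v ≠ 0 := by
  obtain ⟨a, ha, hrep⟩ := rep_smul v hv
  have := hf _ hmem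
  rw [hrep, map_smul, smul_eq_mul] at this
  intro h; rw [h, mul_zero] at this; exact this rfl

-- the cone over Ω is open
lemma cone_open {d : ℕ} {Ω : Set (PV d)} (hΩ : IsOpen Ω) :
    IsOpen {v : Fin (d+1) → ℝ | ∃ hv : v ≠ 0, Projectivization.mk ℝ v hv ∈ Ω} := by
  have h1 : IsOpen {v : Fin (d+1) → ℝ | v ≠ 0} := isOpen_compl_singleton
  have h2 : Continuous (Projectivization.mk' ℝ : {v : Fin (d+1) → ℝ // v ≠ 0} → PV d) :=
    continuous_quotient_mk'
  have h3 : IsOpen ((Projectivization.mk' ℝ : {v : Fin (d+1) → ℝ // v ≠ 0} → PV d) ⁻¹' Ω) :=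
    hΩ.preimage h2
  have h4 := h1.isOpenMap_subtype_val _ h3
  convert h4 using 1
  ext v
  constructor
  · rintro ⟨hv, hmem⟩
    exact ⟨⟨v, hv⟩, hmem, rfl⟩
  · rintro ⟨⟨w, hw⟩, hmem, rfl⟩
    exact ⟨hw, hmem⟩

noncomputable def dotF {d : ℕ} (c : Fin (d+1) → ℝ) : Module.Dual ℝ (Fin (d+1) → ℝ) :=
  ∑ i, c i • LinearMap.proj i

lemma dotF_apply {d : ℕ} (c v : Fin (d+1) → ℝ) : dotF c v = ∑ i, c i * v i := by
  simp [dotF]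

lemma dotF_surj {d : ℕ} (f : Module.Dual ℝ (Fin (d+1) → ℝ)) :
    ∃ c : Fin (d+1) → ℝ, dotF c = f := by
  refine ⟨fun i => f (fun j => if i = j then 1 else 0), LinearMap.ext fun v => ?_⟩
  rw [dotF_apply, LinearMap.pi_apply_eq_sum_univ f v]
  exact Finset.sum_congr rfl fun i _ => by rw [smul_eq_mul, mul_comm]

lemma dotF_smul {d : ℕ} (r : ℝ) (c : Fin (d+1) → ℝ) : dotF (r • c) = r • dotF c := by
  refine LinearMap.ext fun v => ?_
  simp [dotF_apply, Finset.mul_sum, mul_assoc]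

lemma continuous_dotF_eval {d : ℕ} (v : Fin (d+1) → ℝ) :
    Continuous (fun c : Fin (d+1) → ℝ => dotF c v) := by
  simp only [dotF_apply]
  exact continuous_finset_sum _ fun i _ => (continuous_apply i).mul continuous_const

lemma dotF_eq_zero {d : ℕ} {c : Fin (d+1) → ℝ} (h : dotF c = 0) : c = 0 := by
  funext i
  have := congrFun (congrArg (fun f : Module.Dual ℝ (Fin (d+1) → ℝ) => (f : (Fin (d+1) → ℝ) → ℝ)) h) (fun j => if i = j then 1 else 0)
  simp only [dotF_apply] at this
  simpa [Finset.sum_ite_eq, mul_ite] using this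

def normDual {d : ℕ} (Ω : Set (PV d)) : Set (Fin (d+1) → ℝ) :=
  {c | ‖c‖ = 1 ∧ ∀ p ∈ Ω, dotF c p.rep ≠ 0}

lemma normDual_closed {d : ℕ} {Ω : Set (PV d)} (hΩ : IsOpen Ω) :
    IsClosed (normDual Ω) := by
  apply IsSeqClosed.isClosed
  intro u c hu hlim
  have hnorm : ‖c‖ = 1 := by
    have h1 : Filter.Tendsto (fun k => ‖u k‖) atTop (nhds ‖c‖) :=
      (continuous_norm.tendsto c).comp hlim
    have h2 : (fun k => ‖u k‖) = fun _ => (1:ℝ) := funext fun k => (hu k).1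
    rw [h2] at h1
    exact (tendsto_const_nhds_iff.mp h1).symm
  refine ⟨hnorm, fun p hp => ?_⟩
  intro hc0
  set u0 := p.rep with hu0def
  have hu0 : u0 ≠ 0 := p.rep_nonzero
  have hmem : u0 ∈ {v : Fin (d+1) → ℝ | ∃ hv : v ≠ 0, Projectivization.mk ℝ v hv ∈ Ω} := by
    refine ⟨hu0, ?_⟩
    rw [Projectivization.mk_rep]
    exact hp
  obtain ⟨ε, hε, hball⟩ := Metric.isOpen_iff.mp (cone_open hΩ) u0 hmem
  have hcne : dotF c ≠ 0 := by
    intro h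
    rw [dotF_eq_zero h] at hnorm
    simp at hnorm
  obtain ⟨w, hw⟩ : ∃ w, dotF c w ≠ 0 := by
    by_contra h
    push_neg at h
    exact hcne (LinearMap.ext h)
  set w' := (dotF c w)⁻¹ • w with hw'def
  have hw'1 : dotF c w' = 1 := by
    rw [hw'def, map_smul, smul_eq_mul, inv_mul_cancel₀ hw]
  set t := ε / (2 * (‖w'‖ + 1)) with htdef
  have hwpos : (0:ℝ) < 2 * (‖w'‖ + 1) := by positivity
  have ht : 0 < t := div_pos hε hwpos
  have hptmem : ∀ s : ℝ, |s| ≤ t → u0 + s • w' ∈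
      {v : Fin (d+1) → ℝ | ∃ hv : v ≠ 0, Projectivization.mk ℝ v hv ∈ Ω} := by
    intro s hs
    apply hball
    rw [Metric.mem_ball, dist_eq_norm]
    have heq : u0 + s • w' - u0 = s • w' := by abel
    rw [heq, norm_smul, Real.norm_eq_abs]
    calc |s| * ‖w'‖ ≤ t * ‖w'‖ := mul_le_mul_of_nonneg_right hs (norm_nonneg _)
      _ < ε := by
          rw [htdef, div_mul_eq_mul_div, div_lt_iff₀ hwpos]
          nlinarith [norm_nonneg w', hε]
  have hprodpos : ∀ k, 0 < dotF (u k) (u0 + t • w') * dotF (u k) (u0 - t • w') := by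
    intro k
    have hne : ∀ s : ℝ, |s| ≤ t → dotF (u k) (u0 + s • w') ≠ 0 := by
      intro s hs
      obtain ⟨hv, hm⟩ := hptmem s hs
      exact cone_nonzero (hu k).2 hv hm
    set A := dotF (u k) u0 with hA
    set B := dotF (u k) w' with hB
    have hplus : dotF (u k) (u0 + t • w') = A + t * B := by
      rw [map_add, map_smul, smul_eq_mul]
    have hminus : dotF (u k) (u0 - t • w') = A - t * B := by
      rw [map_sub, map_smul, smul_eq_mul]
    rw [hplus, hminus]
    rcases lt_trichotomy ((A + t * B) * (A - t * B)) 0 with hlt | heq | hgt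
    · exfalso
      have hB0 : B ≠ 0 := by
        intro h
        rw [h] at hlt
        nlinarith [mul_self_nonneg A]
      have habs : |A| < t * |B| :=
        lt_of_pow_lt_pow_left₀ 2 (mul_nonneg ht.le (abs_nonneg B))
          (by
            have e : (t * |B|) ^ 2 = t ^ 2 * B ^ 2 := by rw [mul_pow, sq_abs]
            nlinarith [sq_abs A, e])
      have hs : |(-A/B)| ≤ t := by
        rw [abs_div, abs_neg, div_le_iff₀ (abs_pos.mpr hB0)]
        exact le_of_lt habs
      apply hne (-A/B) hs
      rw [map_add, map_smul, smul_eq_mul, ← hA, ← hB]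
      field_simp
      ring
    · exfalso
      rcases mul_eq_zero.mp heq with h | h
      · exact hne t (le_of_eq (abs_of_pos ht)) (by rw [hplus]; exact h)
      · apply hne (-t) (by rw [abs_neg]; exact le_of_eq (abs_of_pos ht))
        rw [map_add, map_smul, smul_eq_mul, ← hA, ← hB]
        linarith
    · exact hgt
  have hval1 : dotF c (u0 + t • w') = t := by
    rw [map_add, map_smul, smul_eq_mul, hc0, hw'1]; ring
  have hval2 : dotF c (u0 - t • w') = -t := by
    rw [map_sub, map_smul, smul_eq_mul, hc0, hw'1]; ring
  have hlim1 : Filter.Tendsto (fun k => dotF (u k) (u0 + t • w')) atTop (nhds t) := by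
    have h := ((continuous_dotF_eval (u0 + t • w')).tendsto c).comp hlim
    rwa [hval1] at h
  have hlim2 : Filter.Tendsto (fun k => dotF (u k) (u0 - t • w')) atTop (nhds (-t)) := by
    have h := ((continuous_dotF_eval (u0 - t • w')).tendsto c).comp hlim
    rwa [hval2] at h
  have hprod : Filter.Tendsto
      (fun k => dotF (u k) (u0 + t • w') * dotF (u k) (u0 - t • w')) atTop (nhds (t * -t)) :=
    hlim1.mul hlim2
  have hge : (0:ℝ) ≤ t * -t :=
    ge_of_tendsto hprod (Filter.Eventually.of_forall fun k => (hprodpos k).le)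
  nlinarith

lemma dotF_zero {d : ℕ} : dotF (d := d) 0 = 0 := by
  refine LinearMap.ext fun v => ?_
  simp [dotF_apply]

lemma dual_normalize {d : ℕ} {Ω : Set (PV d)} {f : Module.Dual ℝ (Fin (d+1) → ℝ)}
    (hf : f ∈ dualSet Ω) :
    ∃ c ∈ normDual Ω, ∃ r : ℝ, 0 < r ∧ f = r • dotF c := by
  obtain ⟨c, rfl⟩ := dotF_surj f
  have hc : c ≠ 0 := fun h => hf.1 (by rw [h, dotF_zero])
  have hcn : (0:ℝ) < ‖c‖ := norm_pos_iff.mpr hc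
  refine ⟨‖c‖⁻¹ • c, ⟨norm_smul_inv_norm hc, fun p hp => ?_⟩, ‖c‖, hcn, ?_⟩
  · rw [dotF_smul, LinearMap.smul_apply, smul_eq_mul]
    exact mul_ne_zero (inv_ne_zero hcn.ne') (hf.2 p hp)
  · rw [dotF_smul, smul_smul, mul_inv_cancel₀ hcn.ne', one_smul]

lemma dual_ratio_bound {d : ℕ} {Ω : Set (PV d)} (hΩ : IsOpen Ω) (a b : PV d)
    (ha : a ∈ Ω) (hb : b ∈ Ω) :
    ∃ K : ℝ, 0 ≤ K ∧ ∀ f ∈ dualSet Ω, |f a.rep| ≤ K * |f b.rep| := by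
  rcases (normDual Ω).eq_empty_or_nonempty with hS | hS
  · refine ⟨0, le_refl 0, fun f hf => ?_⟩
    obtain ⟨c, hc, -⟩ := dual_normalize hf
    rw [hS] at hc
    exact absurd hc (Set.notMem_empty c)
  · have hcomp : IsCompact (normDual Ω) := by
      apply (isCompact_sphere (0 : Fin (d+1) → ℝ) 1).of_isClosed_subset (normDual_closed hΩ)
      intro c hc
      rw [mem_sphere_zero_iff_norm]
      exact hc.1
    obtain ⟨c₀, hc₀S, hc₀min⟩ := hcomp.exists_isMinOn hS
      ((continuous_dotF_eval b.rep).abs.continuousOn)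
    obtain ⟨c₁, hc₁S, hc₁max⟩ := hcomp.exists_isMaxOn hS
      ((continuous_dotF_eval a.rep).abs.continuousOn)
    have hm : 0 < |dotF c₀ b.rep| := abs_pos.mpr (hc₀S.2 b hb)
    refine ⟨|dotF c₁ a.rep| / |dotF c₀ b.rep|, by positivity, fun f hf => ?_⟩
    obtain ⟨c, hcS, r, hr, rfl⟩ := dual_normalize hf
    have hAa : |dotF c a.rep| ≤ |dotF c₁ a.rep| := hc₁max hcS
    have hBb : |dotF c₀ b.rep| ≤ |dotF c b.rep| := hc₀min hcS
    rw [LinearMap.smul_apply, LinearMap.smul_apply, smul_eq_mul, smul_eq_mul,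
      abs_mul, abs_mul, abs_of_pos hr, div_mul_eq_mul_div, le_div_iff₀ hm]
    nlinarith [mul_le_mul hAa hBb hm.le (abs_nonneg (dotF c₁ a.rep)), hr.le,
      abs_nonneg (dotF c a.rep), abs_nonneg (dotF c b.rep)]

lemma logRatio_bddAbove {d : ℕ} {Ω : Set (PV d)} (hΩ : IsOpen Ω) (a b : PV d)
    (ha : a ∈ Ω) (hb : b ∈ Ω) :
    BddAbove {t | ∃ f ∈ dualSet Ω, ∃ g ∈ dualSet Ω, t = logRatio f g a b} := by
  obtain ⟨K₁, hK₁0, hK₁⟩ := dual_ratio_bound hΩ a b ha hb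
  obtain ⟨K₂, hK₂0, hK₂⟩ := dual_ratio_bound hΩ b a hb ha
  refine ⟨Real.log (K₁ * K₂), ?_⟩
  rintro t ⟨f, hf, g, hg, rfl⟩
  have hfa := hf.2 a ha
  have hfb := hf.2 b hb
  have hga := hg.2 a ha
  have hgb := hg.2 b hb
  have hpos : 0 < |f b.rep * g a.rep| := abs_pos.mpr (mul_ne_zero hfb hga)
  have hnumpos : 0 < |f a.rep * g b.rep| := abs_pos.mpr (mul_ne_zero hfa hgb)
  apply Real.log_le_log (div_pos hnumpos hpos)
  rw [div_le_iff₀ hpos, abs_mul, abs_mul]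
  nlinarith [mul_le_mul (hK₁ f hf) (hK₂ g hg) (abs_nonneg (g b.rep))
    (mul_nonneg hK₁0 (abs_nonneg (f b.rep))), abs_nonneg (f a.rep), abs_nonneg (g b.rep)]

/-- if `Ω` is a proper domain, `p_n → x ∈ ∂Ω`, `q_n → y ∈ ∂Ω`, and
`C_Ω(p_n,q_n)` is eventually bounded (i.e. `limsup C_Ω(p_n,q_n) < ∞`), then `y ∈ ker f`
for every `f ∈ Ω*` with `f(x) = 0`. -/
theorem boundary_behavior {d : ℕ} (Ω : Set (PV d)) (hΩ : IsProperDomain Ω)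
    (p q : ℕ → PV d) (hp : ∀ n, p n ∈ Ω) (hq : ∀ n, q n ∈ Ω)
    (x y : PV d) (hx : x ∈ frontier Ω) (hy : y ∈ frontier Ω)
    (hpx : Tendsto p atTop (nhds x)) (hqy : Tendsto q atTop (nhds y))
    (M : ℝ) (hM : ∀ᶠ n in atTop, CC Ω (p n) (q n) ≤ M) :
    ∀ f ∈ dualSet Ω, f x.rep = 0 → f y.rep = 0 := by
  obtain ⟨hopen, -, g, hg0, hgcl⟩ := hΩ
  intro f hf hfx
  by_contra hfy
  have hgdual : g ∈ dualSet Ω := ⟨hg0, fun r hr => hgcl r (subset_closure hr)⟩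
  have hxcl : x ∈ closure Ω := frontier_subset_closure hx
  have hycl : y ∈ closure Ω := frontier_subset_closure hy
  have hAx : normRatio f x = 0 := by
    rw [normRatio_rep, hfx, abs_zero, zero_div]
  have hBx : 0 < normRatio g x := by
    rw [normRatio_rep]
    exact div_pos (abs_pos.mpr (hgcl x hxcl)) (norm_pos_iff.mpr x.rep_nonzero)
  have hAy : 0 < normRatio f y := by
    rw [normRatio_rep]
    exact div_pos (abs_pos.mpr hfy) (norm_pos_iff.mpr y.rep_nonzero)
  have hBy : 0 < normRatio g y := by
    rw [normRatio_rep]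
    exact div_pos (abs_pos.mpr (hgcl y hycl)) (norm_pos_iff.mpr y.rep_nonzero)
  have hAp : Tendsto (fun n => normRatio f (p n)) atTop (nhds 0) := by
    rw [← hAx]; exact ((continuous_normRatio f).tendsto x).comp hpx
  have hBp : Tendsto (fun n => normRatio g (p n)) atTop (nhds (normRatio g x)) :=
    ((continuous_normRatio g).tendsto x).comp hpx
  have hAq : Tendsto (fun n => normRatio f (q n)) atTop (nhds (normRatio f y)) :=
    ((continuous_normRatio f).tendsto y).comp hqy
  have hBq : Tendsto (fun n => normRatio g (q n)) atTop (nhds (normRatio g y)) :=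
    ((continuous_normRatio g).tendsto y).comp hqy
  have hnum : Tendsto (fun n => normRatio g (p n) * normRatio f (q n)) atTop
      (nhds (normRatio g x * normRatio f y)) := hBp.mul hAq
  have hden : Tendsto (fun n => normRatio f (p n) * normRatio g (q n)) atTop (nhds 0) := by
    have := hAp.mul hBq
    rwa [zero_mul] at this
  have hdenpos : ∀ n, 0 < normRatio f (p n) * normRatio g (q n) := by
    intro n
    apply mul_pos
    · rw [normRatio_rep]
      exact div_pos (abs_pos.mpr (hf.2 _ (hp n))) (norm_pos_iff.mpr (p n).rep_nonzero)
    · rw [normRatio_rep]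
      exact div_pos (abs_pos.mpr (hgdual.2 _ (hq n))) (norm_pos_iff.mpr (q n).rep_nonzero)
  have hdenin : Tendsto (fun n => normRatio f (p n) * normRatio g (q n)) atTop
      (nhdsWithin 0 (Set.Ioi 0)) :=
    tendsto_nhdsWithin_iff.mpr ⟨hden, Filter.Eventually.of_forall fun n => hdenpos n⟩
  have hinv : Tendsto (fun n => (normRatio f (p n) * normRatio g (q n))⁻¹) atTop atTop :=
    tendsto_inv_nhdsGT_zero.comp hdenin
  have hrat : Tendsto (fun n => (normRatio g (p n) * normRatio f (q n)) *
      (normRatio f (p n) * normRatio g (q n))⁻¹) atTop atTop :=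
    hnum.pos_mul_atTop (mul_pos hBx hAy) hinv
  have hlog : Tendsto (fun n => Real.log ((normRatio g (p n) * normRatio f (q n)) /
      (normRatio f (p n) * normRatio g (q n)))) atTop atTop := by
    simp_rw [div_eq_mul_inv]
    exact Real.tendsto_log_atTop.comp hrat
  have hident : ∀ n, logRatio g f (p n) (q n) = Real.log ((normRatio g (p n) * normRatio f (q n)) /
      (normRatio f (p n) * normRatio g (q n))) := by
    intro n
    unfold logRatio
    congr 1
    rw [normRatio_rep, normRatio_rep, normRatio_rep, normRatio_rep]
    have h1 : ‖(p n).rep‖ ≠ 0 := norm_ne_zero_iff.mpr (p n).rep_nonzero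
    have h2 : ‖(q n).rep‖ ≠ 0 := norm_ne_zero_iff.mpr (q n).rep_nonzero
    have h3 : |f (p n).rep| ≠ 0 := abs_ne_zero.mpr (hf.2 _ (hp n))
    have h4 : |g (q n).rep| ≠ 0 := abs_ne_zero.mpr (hgdual.2 _ (hq n))
    rw [abs_mul, abs_mul, div_eq_div_iff (mul_ne_zero h4 h3)
      (mul_ne_zero (div_ne_zero h3 h1) (div_ne_zero h4 h2))]
    ring
  have htend : Tendsto (fun n => logRatio g f (p n) (q n)) atTop atTop := by
    rw [show (fun n => logRatio g f (p n) (q n)) = _ from funext hident]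
    exact hlog
  have hle : ∀ n, logRatio g f (p n) (q n) ≤ CC Ω (p n) (q n) := fun n =>
    le_csSup (logRatio_bddAbove hopen _ _ (hp n) (hq n)) ⟨g, hgdual, f, hf, rfl⟩
  obtain ⟨n, hn1, hn2⟩ :=
    ((htend.eventually (eventually_ge_atTop (M+1))).and hM).exists
  linarith [hle n]
end

section
/- Let F: ℝ^{d-1} → ℝ be a C² function with F(0) = 0, ∇F(0) = 0, and F(x) > 0 for all x ≠ 0. Suppose there exist λ > 1 and A ∈ O(d-1) such that λ^{2n} F(λ^{-n} Aⁿ x) = F(x) for all x ∈ ℝ^{d-1} and all n ∈ ℕ. Then F(x) = ½ Hess F(0)(x,x) for all x, and Hess F(0) is positive definite. -/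
set_option maxHeartbeats 1000000

open Filter Topology

/-- if `F : ℝ^{d-1} → ℝ` is `C²` with `F(0)=0`, `∇F(0)=0`, `F > 0` away
from `0`, and satisfies `λ^{2n} F(λ^{-n} Aⁿ x) = F(x)` for some `λ > 1` and orthogonal
`A`, then `F(x) = ½ Hess F(0)(x,x)` and `Hess F(0)` is positive definite. -/
theorem quadratic_from_scaling {n : ℕ} (F : EuclideanSpace ℝ (Fin n) → ℝ)
    (hF : ContDiff ℝ 2 F) (h0 : F 0 = 0) (hgrad : fderiv ℝ F 0 = 0)
    (hpos : ∀ x, x ≠ 0 → 0 < F x)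
    (lam : ℝ) (hlam : 1 < lam)
    (A : EuclideanSpace ℝ (Fin n) ≃ₗᵢ[ℝ] EuclideanSpace ℝ (Fin n))
    (hfun : ∀ (x : EuclideanSpace ℝ (Fin n)) (k : ℕ),
      lam ^ (2 * k) * F ((lam⁻¹) ^ k • (⇑A)^[k] x) = F x) :
    (∀ x, F x = (1 / 2) * iteratedFDeriv ℝ 2 F 0 ![x, x]) ∧
    (∀ x, x ≠ 0 → 0 < iteratedFDeriv ℝ 2 F 0 ![x, x]) := by
  set B := fderiv ℝ (fderiv ℝ F) 0 with hBdef
  have hsymm : ∀ v w : EuclideanSpace ℝ (Fin n), B v w = B w v :=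
    hF.contDiffAt.isSymmSndFDerivAt (by simp [minSmoothness_of_isRCLikeNormedField])
  have hder : ∀ z : EuclideanSpace ℝ (Fin n), HasFDerivAt F (fderiv ℝ F z) z := fun z =>
    (hF.differentiable (by norm_num) z).hasFDerivAt
  have hf'cd : ContDiff ℝ 1 (fderiv ℝ F) := hF.fderiv_right (by norm_num)
  have hB' : HasFDerivAt (fderiv ℝ F) B 0 := (hf'cd.differentiable one_ne_zero 0).hasFDerivAt
  have hlam0 : (0:ℝ) < lam := lt_trans one_pos hlam
  -- derivative of the auxiliary function z ↦ F z - (1/2) * B z z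
  have hg : ∀ z : EuclideanSpace ℝ (Fin n),
      HasFDerivAt (fun z => F z - (1/2) * (B z z)) (fderiv ℝ F z - B z) z := by
    intro z
    have h1 : HasFDerivAt (fun z : EuclideanSpace ℝ (Fin n) => B z z)
        ((B z).comp (ContinuousLinearMap.id ℝ _) + B.flip z) z :=
      (B.hasFDerivAt).clm_apply (hasFDerivAt_id z)
    have h2 := (hder z).sub (h1.const_mul (1/2 : ℝ))
    refine h2.congr_fderiv ?_
    refine ContinuousLinearMap.ext fun w => ?_
    simp only [ContinuousLinearMap.coe_sub', Pi.sub_apply, ContinuousLinearMap.smul_apply,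
      ContinuousLinearMap.add_apply, ContinuousLinearMap.coe_comp',
      ContinuousLinearMap.coe_id', Function.comp_apply, id_eq,
      ContinuousLinearMap.flip_apply, smul_eq_mul]
    rw [hsymm w z]
    ring
  -- second-order Taylor estimate at 0
  have key : ∀ ε > (0:ℝ), ∃ δ > (0:ℝ), ∀ y : EuclideanSpace ℝ (Fin n), ‖y‖ < δ →
      |F y - (1/2) * (B y y)| ≤ ε * ‖y‖ ^ 2 := by
    intro ε hε
    have hlo : (fun h : EuclideanSpace ℝ (Fin n) =>
        fderiv ℝ F (0 + h) - fderiv ℝ F 0 - B h) =o[𝓝 0] fun h => h :=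
      hasFDerivAt_iff_isLittleO_nhds_zero.mp hB'
    have hev := (Asymptotics.isLittleO_iff.mp hlo) hε
    rw [Metric.eventually_nhds_iff] at hev
    obtain ⟨δ, hδpos, hδ⟩ := hev
    refine ⟨δ, hδpos, fun y hy => ?_⟩
    have bound : ∀ z ∈ segment ℝ (0 : EuclideanSpace ℝ (Fin n)) y,
        ‖fderiv ℝ F z - B z‖ ≤ ε * ‖y‖ := by
      intro z hz
      obtain ⟨a, b, ha, hb, hab, hzeq⟩ := hz
      have hz1 : ‖z‖ ≤ ‖y‖ := by
        rw [← hzeq, smul_zero, zero_add, norm_smul, Real.norm_eq_abs, abs_of_nonneg hb]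
        nlinarith [norm_nonneg y]
      have hzδ : dist z (0 : EuclideanSpace ℝ (Fin n)) < δ := by
        rw [dist_zero_right]; exact hz1.trans_lt hy
      have h3 := hδ hzδ
      simp only [zero_add, hgrad, sub_zero] at h3
      calc ‖fderiv ℝ F z - B z‖ ≤ ε * ‖z‖ := h3
        _ ≤ ε * ‖y‖ := mul_le_mul_of_nonneg_left hz1 hε.le
    have hmvt := Convex.norm_image_sub_le_of_norm_hasFDerivWithin_le
      (fun z _ => (hg z).hasFDerivWithinAt) bound
      (convex_segment (0 : EuclideanSpace ℝ (Fin n)) y)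
      (left_mem_segment ℝ (0 : EuclideanSpace ℝ (Fin n)) y)
      (right_mem_segment ℝ (0 : EuclideanSpace ℝ (Fin n)) y)
    simp only [h0, map_zero, ContinuousLinearMap.zero_apply, mul_zero, sub_zero,
      Real.norm_eq_abs] at hmvt
    calc |F y - 1/2 * (B y y)| ≤ ε * ‖y‖ * ‖y‖ := by simpa using hmvt
      _ = ε * ‖y‖ ^ 2 := by ring
  -- norm and distance preservation by iterates of A
  have hiter : ∀ (k : ℕ) (u : EuclideanSpace ℝ (Fin n)), ‖(⇑A)^[k] u‖ = ‖u‖ := by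
    intro k
    induction k with
    | zero => simp
    | succ m ih => intro u; rw [Function.iterate_succ_apply', A.norm_map, ih]
  have hdist : ∀ (k : ℕ) (u v : EuclideanSpace ℝ (Fin n)),
      dist ((⇑A)^[k] u) ((⇑A)^[k] v) = dist u v := by
    intro k
    induction k with
    | zero => simp
    | succ m ih => intro u v; rw [Function.iterate_succ_apply', Function.iterate_succ_apply',
        A.dist_map, ih]
  have hpow : ∀ m : ℕ, lam ^ m * (lam⁻¹) ^ m = 1 := fun m => by
    rw [inv_pow, mul_inv_cancel₀ (pow_ne_zero m (ne_of_gt hlam0))]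
  -- convergence of the quadratic form along the orbit
  have hc : ∀ x : EuclideanSpace ℝ (Fin n),
      Tendsto (fun k => (1/2) * (B ((⇑A)^[k] x) ((⇑A)^[k] x))) atTop (𝓝 (F x)) := by
    intro x
    rw [Metric.tendsto_atTop]
    intro ε hε
    have hε₁ : (0:ℝ) < ε / (‖x‖^2 + 1) := by positivity
    obtain ⟨δ, hδpos, hδ⟩ := key _ hε₁
    have hgeo : Tendsto (fun k : ℕ => (lam⁻¹) ^ k * ‖x‖) atTop (𝓝 0) := by
      have h1 : |lam⁻¹| < 1 := by
        rw [abs_of_pos (inv_pos.mpr hlam0)]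
        exact inv_lt_one_of_one_lt₀ hlam
      simpa using (tendsto_pow_atTop_nhds_zero_of_abs_lt_one h1).mul_const ‖x‖
    rw [Metric.tendsto_atTop] at hgeo
    obtain ⟨N, hN⟩ := hgeo δ hδpos
    refine ⟨N, fun k hk => ?_⟩
    set y : EuclideanSpace ℝ (Fin n) := (lam⁻¹) ^ k • (⇑A)^[k] x with hy
    have hinvpos : (0:ℝ) < (lam⁻¹) ^ k := by positivity
    have hny : ‖y‖ = (lam⁻¹) ^ k * ‖x‖ := by
      rw [hy, norm_smul, Real.norm_eq_abs, abs_of_pos hinvpos, hiter]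
    have hnyδ : ‖y‖ < δ := by
      rw [hny]
      have := hN k hk
      rwa [Real.dist_eq, sub_zero, abs_of_nonneg (by positivity)] at this
    have htay := hδ y hnyδ
    -- B y y = (lam⁻¹)^(2k) * B (A^k x) (A^k x)
    show dist ((1/2) * (B ((⇑A)^[k] x) ((⇑A)^[k] x))) (F x) < ε
    set Q : ℝ := B ((⇑A)^[k] x) ((⇑A)^[k] x) with hQdef
    have hByy : B y y = (lam⁻¹) ^ (2*k) * Q := by
      simp only [hy, hQdef, map_smul, ContinuousLinearMap.smul_apply, smul_eq_mul]
      rw [two_mul, pow_add]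
      ring
    have hFx : F x = lam ^ (2*k) * F y := (hfun x k).symm
    have hcan : lam ^ (2*k) * (lam⁻¹) ^ (2*k) = 1 := hpow (2*k)
    have hQ : (1/2) * Q = lam ^ (2*k) * ((1/2) * (B y y)) := by
      calc (1/2) * Q = lam ^ (2*k) * (lam⁻¹) ^ (2*k) * ((1/2) * Q) := by rw [hcan, one_mul]
        _ = lam ^ (2*k) * ((1/2) * ((lam⁻¹) ^ (2*k) * Q)) := by ring
        _ = lam ^ (2*k) * ((1/2) * (B y y)) := by rw [← hByy]
    have hdd : dist ((1/2) * Q) (F x) = lam ^ (2*k) * |F y - (1/2) * (B y y)| := by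
      rw [Real.dist_eq, hQ, hFx, ← mul_sub, abs_mul, abs_of_pos (pow_pos hlam0 (2*k)),
        abs_sub_comm]
    rw [hdd]
    have hyx2 : lam ^ (2*k) * ‖y‖^2 = ‖x‖^2 := by
      rw [hny, mul_pow, ← pow_mul, mul_comm k 2, ← mul_assoc, hcan, one_mul]
    calc lam ^ (2*k) * |F y - (1/2) * (B y y)|
        ≤ lam ^ (2*k) * (ε / (‖x‖^2 + 1) * ‖y‖^2) := by
          exact mul_le_mul_of_nonneg_left htay (le_of_lt (pow_pos hlam0 _))
      _ = ε / (‖x‖^2 + 1) * (lam ^ (2*k) * ‖y‖^2) := by ring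
      _ = ε / (‖x‖^2 + 1) * ‖x‖^2 := by rw [hyx2]
      _ < ε := by
          rw [div_mul_eq_mul_div, div_lt_iff₀ (by positivity)]
          nlinarith [sq_nonneg ‖x‖]
  -- recurrence: iterates come back near the starting point
  have hfreq : ∀ (x : EuclideanSpace ℝ (Fin n)) (r : ℝ), 0 < r →
      ∃ᶠ k in atTop, dist ((⇑A)^[k] x) x < r := by
    intro x r hr
    rw [Filter.frequently_atTop]
    intro N
    set u : ℕ → EuclideanSpace ℝ (Fin n) := fun j => (⇑A)^[(N+1)*j] x with hu
    have humem : ∀ j, u j ∈ Metric.closedBall (0 : EuclideanSpace ℝ (Fin n)) ‖x‖ := by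
      intro j
      simp [hu, Metric.mem_closedBall, dist_zero_right, hiter]
    obtain ⟨z, _, φ, hφ, hconv⟩ :=
      (isCompact_closedBall (0 : EuclideanSpace ℝ (Fin n)) ‖x‖).tendsto_subseq humem
    rw [Metric.tendsto_atTop] at hconv
    obtain ⟨J, hJ⟩ := hconv (r/2) (by positivity)
    have hφlt : φ J < φ (J+1) := hφ (Nat.lt_succ_self J)
    refine ⟨(N+1) * (φ (J+1) - φ J), ?_, ?_⟩
    · have h1 : 1 ≤ φ (J+1) - φ J := by omega
      calc N ≤ N + 1 := Nat.le_succ N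
        _ = (N+1) * 1 := (mul_one _).symm
        _ ≤ (N+1) * (φ (J+1) - φ J) := Nat.mul_le_mul_left _ h1
    · have hsplit : (N+1) * (φ (J+1)) = (N+1) * (φ J) + (N+1) * (φ (J+1) - φ J) := by
        rw [← Nat.mul_add, Nat.add_sub_cancel' hφlt.le]
      have heq : dist ((⇑A)^[(N+1)*(φ (J+1) - φ J)] x) x
          = dist (u (φ (J+1))) (u (φ J)) := by
        rw [← hdist ((N+1)*(φ J)) _ x]
        congr 1
        rw [hu]
        simp only
        rw [hsplit, Function.iterate_add_apply]
      rw [heq]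
      calc dist (u (φ (J+1))) (u (φ J)) ≤ dist (u (φ (J+1))) z + dist z (u (φ J)) :=
            dist_triangle _ _ _
        _ < r/2 + r/2 := by
            have h1 := hJ (J+1) (Nat.le_succ J)
            have h2 := hJ J le_rfl
            rw [dist_comm z]
            exact add_lt_add h1 h2
        _ = r := by ring
  -- continuity of the quadratic form
  have hcont : Continuous fun z : EuclideanSpace ℝ (Fin n) => (1/2) * (B z z) := by
    have h1 : Continuous fun z : EuclideanSpace ℝ (Fin n) => B z z :=
      isBoundedBilinearMap_apply.continuous.comp (B.continuous.prodMk continuous_id)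
    exact continuous_const.mul h1
  -- main identity
  have main : ∀ x : EuclideanSpace ℝ (Fin n), F x = (1/2) * (B x x) := by
    intro x
    apply eq_of_forall_dist_le
    intro ε hε
    have hca := (hcont.continuousAt (x := x))
    rw [Metric.continuousAt_iff] at hca
    obtain ⟨r, hrpos, hr⟩ := hca (ε/2) (by positivity)
    obtain ⟨N, hN⟩ := Metric.tendsto_atTop.mp (hc x) (ε/2) (by positivity)
    obtain ⟨k, hkN, hkr⟩ := Filter.frequently_atTop.mp (hfreq x r hrpos) N
    have h1 := hN k hkN
    have h2 := hr hkr
    calc dist (F x) ((1/2) * (B x x))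
        ≤ dist (F x) ((1/2) * (B ((⇑A)^[k] x) ((⇑A)^[k] x)))
          + dist ((1/2) * (B ((⇑A)^[k] x) ((⇑A)^[k] x))) ((1/2) * (B x x)) :=
          dist_triangle _ _ _
      _ ≤ ε/2 + ε/2 := by
          apply add_le_add
          · rw [dist_comm]; exact h1.le
          · exact h2.le
      _ = ε := by ring
  have hIF : ∀ x : EuclideanSpace ℝ (Fin n),
      iteratedFDeriv ℝ 2 F 0 ![x, x] = B x x := by
    intro x
    rw [iteratedFDeriv_two_apply]
    simp
    rfl
  constructor
  · intro x
    rw [hIF x]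
    exact main x
  · intro x hx
    rw [hIF x]
    have := main x
    have hp := hpos x hx
    nlinarith
end
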